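/- For every prime d = p ≡ 3 (mod 4) with d > 3, there exists a unimodular x₁ ∈ C such that the Legendre vector v (with v_0 = √x₀, x₀ = −2−√(d+1), v_j = x₁ for j a quadratic residue mod d, v_j = −1/x₁ otherwise) satisfies the X-overlap equation ⟨v|X^{−2j}|v⟩ = (√(d+1)+1)·v_j² for all j ≠ 0. -/

import Mathlib

open Matrix Finset ComplexConjugate

noncomputable section

/-- ω = exp(2πi/d) -/
def omg (d : ℕ) : ℂ := Complex.exp (2 * Real.pi * Complex.I / d)

/-- τ = -exp(πi/d) -/
def tau (d : ℕ) : ℂ := -Complex.exp (Real.pi * Complex.I / d)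

/-- The clock matrix `Z`, with `Z|r⟩ = ω^r |r⟩`. -/
def Zmat (d : ℕ) [NeZero d] : Matrix (ZMod d) (ZMod d) ℂ :=
  Matrix.diagonal fun r => omg d ^ r.val

/-- The shift matrix `X`, with `X|r⟩ = |r+1⟩` (indices mod d). -/
def Xmat (d : ℕ) [NeZero d] : Matrix (ZMod d) (ZMod d) ℂ :=
  Matrix.of fun r s => if r = s + 1 then 1 else 0

/-- The displacement operators `D_{j,k} = τ^{jk} X^j Z^k`. -/
def Dmat (d : ℕ) [NeZero d] (j k : ZMod d) : Matrix (ZMod d) (ZMod d) ℂ :=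
  tau d ^ (j.val * k.val) • (Xmat d ^ j.val * Zmat d ^ k.val)

/-- Standard Hermitian inner product, conjugate-linear in the first argument. -/
def ip {d : ℕ} [NeZero d] (u w : ZMod d → ℂ) : ℂ := ∑ k, conj (u k) * w k

private lemma key_alg7 (P C v0 ε A B : ℂ) (hP : P = C^2 - 1) (h1 : ε^2 = 1)
    (h2 : B^2 = A^2 + 1) (h3 : v0^2 = -(2+C)) (h4 : C*A = -v0) :
    -P*A^2 - B^2 + 2*(A - v0)*(A + ε*B) = (C+1)*(A + ε*B)^2 := by
  linear_combination (-A^2) * hP + (-(C+1)*B^2) * h1 + (-(C+2)) * h2 + (-1) * h3 +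
    (-(C*A - v0 + 2*A + 2*ε*B)) * h4

private lemma key_alg3 (P C v0 ε A B : ℂ) (hP : P = C^2 - 1) (h1 : ε^2 = 1)
    (h2 : B^2 = A^2 + 1) (h3 : v0^2 = -(2+C)) (h4 : (C+2)*A = v0) :
    -P*A^2 - B^2 + 2*(A - v0)*(A + (-1*ε)*B) = (C+1)*(A + ε*B)^2 := by
  linear_combination (-A^2) * hP + (-(C+1)*B^2) * h1 + (-(C+2)) * h2 + (-1) * h3 +
    (2*A - (C+2)*A - v0 - 2*ε*B) * h4

private lemma quadChar_shift_sum {p : ℕ} [Fact p.Prime] (hp2 : p ≠ 2) (m : ZMod p) (hm : m ≠ 0) :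
    ∑ k : ZMod p, (quadraticChar (ZMod p) k) * (quadraticChar (ZMod p) (k + m)) = -1 := by
  classical
  have hchar : ringChar (ZMod p) ≠ 2 := by
    rw [ZMod.ringChar_zmod_n]; exact hp2
  set χ := quadraticChar (ZMod p) with hχ
  have hpt : ∀ k : ZMod p, k ≠ 0 → χ k * χ (k + m) = χ (1 + m * k⁻¹) := by
    intro k hk
    have h1 : (1 + m * k⁻¹) = k⁻¹ * (k + m) := by field_simp
    have hinv : χ k⁻¹ = χ k := by
      by_cases hsq : IsSquare k
      · rw [(quadraticChar_one_iff_isSquare (inv_ne_zero hk)).mpr hsq.inv,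
          (quadraticChar_one_iff_isSquare hk).mpr hsq]
      · rw [quadraticChar_neg_one_iff_not_isSquare.mpr hsq,
          quadraticChar_neg_one_iff_not_isSquare.mpr (fun h => hsq (by simpa using h.inv))]
    rw [h1, _root_.map_mul, hinv]
  have h0 : χ 0 * χ (0 + m) = 0 := by
    have : χ 0 = 0 := quadraticChar_zero
    rw [this]; ring
  rw [← Finset.add_sum_erase _ _ (Finset.mem_univ (0 : ZMod p)), h0, zero_add]
  have hbij : ∑ k ∈ Finset.univ.erase (0 : ZMod p), χ k * χ (k + m)
      = ∑ w ∈ Finset.univ.erase (1 : ZMod p), χ w := by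
    refine Finset.sum_nbij' (fun k => 1 + m * k⁻¹) (fun w => m * (w - 1)⁻¹) ?_ ?_ ?_ ?_ ?_
    · intro k hk
      simp only [Finset.mem_erase, Finset.mem_univ, and_true] at hk ⊢
      intro h
      have : m * k⁻¹ = 0 := by linear_combination h
      rcases mul_eq_zero.mp this with h' | h'
      · exact hm h'
      · exact hk (by simpa using inv_eq_zero.mp h')
    · intro w hw
      simp only [Finset.mem_erase, Finset.mem_univ, and_true] at hw ⊢
      exact mul_ne_zero hm (inv_ne_zero (sub_ne_zero.mpr hw))
    · intro k hk
      simp only [Finset.mem_erase, Finset.mem_univ, and_true] at hk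
      field_simp
      simp [hm]
    · intro w hw
      simp only [Finset.mem_erase, Finset.mem_univ, and_true] at hw
      have h1 : w - 1 ≠ 0 := sub_ne_zero.mpr hw
      field_simp
      ring
    · intro k hk
      simp only [Finset.mem_erase, Finset.mem_univ, and_true] at hk
      exact hpt k hk
  rw [hbij, Finset.sum_erase_eq_sub (Finset.mem_univ _), quadraticChar_sum_zero hchar, _root_.map_one]
  ring

private lemma Xmat_mulVec (d : ℕ) [NeZero d] (v : ZMod d → ℂ) (r : ZMod d) :
    (Xmat d *ᵥ v) r = v (r - 1) := by
  classical
  simp only [Xmat, Matrix.mulVec, dotProduct, Matrix.of_apply]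
  rw [Finset.sum_eq_single (r - 1)]
  · simp
  · intro s _ hs
    rw [if_neg, zero_mul]
    intro h
    exact hs (by rw [h]; ring)
  · intro h; exact absurd (Finset.mem_univ _) h

private lemma Xmat_pow_mulVec (d : ℕ) [NeZero d] (n : ℕ) (v : ZMod d → ℂ) (r : ZMod d) :
    ((Xmat d ^ n) *ᵥ v) r = v (r - n) := by
  induction n generalizing v r with
  | zero => simp
  | succ n ih =>
    rw [pow_succ, ← Matrix.mulVec_mulVec, ih (Xmat d *ᵥ v) r, Xmat_mulVec]
    congr 1
    push_cast
    ring

open Classical in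
/-- for every prime d = p ≡ 3 (mod 4) with d > 3, there is a
unimodular x₁ such that the Legendre vector (v_0 = √x₀ with x₀ = −2−√(d+1),
v_j = x₁ for j a quadratic residue, v_j = −1/x₁ otherwise) satisfies the
X-overlap equation `⟨v|X^{−2j}|v⟩ = (√(d+1)+1)·v_j²` for all j ≠ 0. -/
theorem legendre_vector_solves_xoverlap (p : ℕ) [NeZero p] (hp : p.Prime)
    (hp4 : p % 4 = 3) (hp3 : 3 < p) :
    ∃ x₁ : ℂ, ‖x₁‖ = 1 ∧
      ∀ v : ZMod p → ℂ,
        v 0 = Complex.I * Real.sqrt (2 + Real.sqrt (p + 1)) →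
        (∀ j : ZMod p, j ≠ 0 → IsSquare j → v j = x₁) →
        (∀ j : ZMod p, j ≠ 0 → ¬IsSquare j → v j = -1 / x₁) →
        ∀ j : ZMod p, j ≠ 0 →
          ip v ((Xmat p ^ (-2 * j : ZMod p).val) *ᵥ v) =
            ((Real.sqrt (p + 1) : ℂ) + 1) * v j ^ 2 := by
  haveI : Fact p.Prime := ⟨hp⟩
  have hp2 : p ≠ 2 := by omega
  have hchar : ringChar (ZMod p) ≠ 2 := by rw [ZMod.ringChar_zmod_n]; exact hp2
  have h2z : (2 : ZMod p) ≠ 0 := by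
    have h : ((2 : ℕ) : ZMod p) ≠ 0 := by
      rw [Ne, ZMod.natCast_eq_zero_iff]
      intro h; have := Nat.le_of_dvd (by norm_num) h; omega
    exact_mod_cast h
  have hp8 : p % 8 = 3 ∨ p % 8 = 7 := by
    have h := Nat.mod_mod_of_dvd p (by norm_num : 4 ∣ 8)
    omega
  set c : ℝ := Real.sqrt (↑p + 1) with hcdef
  have hc0 : 0 ≤ c := Real.sqrt_nonneg _
  have hcsq : c ^ 2 = (p : ℝ) + 1 := Real.sq_sqrt (by positivity)
  have hp7 : (7 : ℝ) ≤ (p : ℝ) := by exact_mod_cast (by omega : 7 ≤ p)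
  have hc2 : 2 ≤ c := by nlinarith
  have h2c : (0:ℝ) ≤ 2 + c := by linarith
  set β : ℝ := if p % 8 = 7 then -Real.sqrt (2 + c) / c else Real.sqrt (2 + c) / (2 + c)
    with hβdef
  have hsq2c : Real.sqrt (2 + c) ^ 2 = 2 + c := Real.sq_sqrt h2c
  have hβsq : β ^ 2 ≤ 1 := by
    rw [hβdef]
    split_ifs
    · rw [div_pow, neg_pow]
      rw [div_le_one (by positivity)]
      nlinarith
    · rw [div_pow]
      rw [div_le_one (by positivity)]
      nlinarith
  set r : ℝ := Real.sqrt (1 - β ^ 2) with hrdef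
  have hr2 : r ^ 2 = 1 - β ^ 2 := Real.sq_sqrt (by linarith)
  set x₁ : ℂ := (r : ℂ) + (β : ℂ) * Complex.I with hx₁def
  have habs : ‖x₁‖ = 1 := by
    rw [hx₁def, Complex.norm_add_mul_I, hr2]
    simp
  refine ⟨x₁, habs, ?_⟩
  intro v hv0 hQR hNQR j hj
  have hx₁ne : x₁ ≠ 0 := by
    intro h; rw [h] at habs; simp at habs
  have hconjx : conj x₁ = x₁⁻¹ := (Complex.inv_eq_conj habs).symm
  set A : ℂ := (β : ℂ) * Complex.I with hAdef
  set B : ℂ := (r : ℂ) with hBdef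
  have hx1AB : x₁ = B + A := hx₁def
  have hconjA : conj A = -A := by
    rw [hAdef]
    simp [_root_.map_mul, Complex.conj_ofReal, Complex.conj_I]
  have hconjB : conj B = B := by rw [hBdef]; exact Complex.conj_ofReal r
  have hxinvAB : x₁⁻¹ = B - A := by
    rw [← hconjx, hx1AB, _root_.map_add, hconjA, hconjB]
    ring
  have hmulinv : x₁ * x₁⁻¹ = 1 := mul_inv_cancel₀ hx₁ne
  have hB2 : B ^ 2 = A ^ 2 + 1 := by
    linear_combination (-(B - A)) * hx1AB + (-x₁) * hxinvAB + hmulinv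
  set χ' : ZMod p → ℂ := fun k => ((quadraticChar (ZMod p) k : ℤ) : ℂ) with hχ'def
  have hvk : ∀ k : ZMod p, k ≠ 0 → v k = A + χ' k * B := by
    intro k hk
    by_cases hsq : IsSquare k
    · rw [hQR k hk hsq]
      simp only [hχ'def]
      rw [(quadraticChar_one_iff_isSquare hk).mpr hsq]
      push_cast
      rw [hx1AB]; ring
    · rw [hNQR k hk hsq]
      simp only [hχ'def]
      rw [quadraticChar_neg_one_iff_not_isSquare.mpr hsq]
      push_cast
      rw [neg_div, one_div, hxinvAB]; ring
  have hχconj : ∀ k, conj (χ' k) = χ' k := by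
    intro k; rw [hχ'def]; simp
  have hcvk : ∀ k : ZMod p, k ≠ 0 → conj (v k) = -A + χ' k * B := by
    intro k hk
    rw [hvk k hk, _root_.map_add, hconjA, _root_.map_mul, hχconj, hconjB]
  have hv0c : conj (v 0) = -(v 0) := by
    rw [hv0]
    simp [_root_.map_mul, Complex.conj_ofReal, Complex.conj_I]
  have hv0sq : (v 0) ^ 2 = -(2 + (c : ℂ)) := by
    rw [hv0, mul_pow, Complex.I_sq, ← Complex.ofReal_pow, hsq2c]
    push_cast
    ring
  have hPC : (p : ℂ) = (c : ℂ) ^ 2 - 1 := by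
    have h : (p : ℝ) = c ^ 2 - 1 := by linarith
    exact_mod_cast congrArg (Complex.ofReal) h
  -- sums
  have hm0 : (2 * j : ZMod p) ≠ 0 := mul_ne_zero h2z hj
  have hcast : (((-2 * j : ZMod p).val : ℕ) : ZMod p) = -2 * j := by
    rw [ZMod.natCast_val, ZMod.cast_id]
  have hS : ip v ((Xmat p ^ (-2 * j : ZMod p).val) *ᵥ v)
      = ∑ k : ZMod p, conj (v k) * v (k + 2 * j) := by
    simp only [ip]
    refine Finset.sum_congr rfl fun k _ => ?_
    rw [Xmat_pow_mulVec, hcast, show k - (-2 * j) = k + 2 * j from by ring]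
  have hχ0 : χ' 0 = 0 := by rw [hχ'def]; simp [quadraticChar_zero]
  have hε : (χ' j) ^ 2 = 1 := by
    simp only [hχ'def]
    exact_mod_cast quadraticChar_sq_one hj
  have hχneg1 : χ' (-1) = -1 := by
    simp only [hχ'def]
    rw [quadraticChar_neg_one_iff_not_isSquare.mpr ?_]
    · push_cast; ring
    · rw [FiniteField.isSquare_neg_one_iff, ZMod.card]
      simp [hp4]
  have hχmul : ∀ a b : ZMod p, χ' (a * b) = χ' a * χ' b := by
    intro a b
    simp only [hχ'def]
    rw [_root_.map_mul]
    push_cast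
    ring
  have hχneg : χ' (-(2 * j)) = -χ' (2 * j) := by
    rw [show -(2 * j) = -1 * (2 * j) from by ring, hχmul, hχneg1]
    ring
  have hsum1 : ∑ k : ZMod p, χ' k = 0 := by
    have h := quadraticChar_sum_zero (F := ZMod p) hchar
    simp only [hχ'def]
    exact_mod_cast congrArg (Int.cast : ℤ → ℂ) h
  have hsum2 : ∑ k : ZMod p, χ' (k + 2 * j) = 0 := by
    have h := Fintype.sum_equiv (Equiv.addRight (2 * j)) (fun k => χ' (k + 2 * j)) χ'
      (fun k => rfl)
    exact h.trans hsum1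
  have hsum3 : ∑ k : ZMod p, χ' k * χ' (k + 2 * j) = -1 := by
    have h := quadChar_shift_sum hp2 (2 * j) hm0
    simp only [hχ'def]
    exact_mod_cast congrArg (Int.cast : ℤ → ℂ) h
  set g : ZMod p → ℂ := fun k => (-A + χ' k * B) * (A + χ' (k + 2 * j) * B) with hgdef
  have hgsum : ∑ k : ZMod p, g k = -(p : ℂ) * A ^ 2 - B ^ 2 := by
    have hexp : ∀ k : ZMod p, g k
        = (-A ^ 2 + A * B * χ' k) - A * B * χ' (k + 2 * j)
          + B ^ 2 * (χ' k * χ' (k + 2 * j)) := by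
      intro k; rw [hgdef]; ring
    rw [Finset.sum_congr rfl (fun k _ => hexp k)]
    rw [Finset.sum_add_distrib, Finset.sum_sub_distrib, Finset.sum_add_distrib,
      ← Finset.mul_sum, ← Finset.mul_sum, ← Finset.mul_sum, hsum1, hsum2, hsum3,
      Finset.sum_const, Finset.card_univ, ZMod.card, nsmul_eq_mul]
    ring
  have h0ne : (0 : ZMod p) ≠ -(2 * j) := (neg_ne_zero.mpr hm0).symm
  have hsplit : ∑ k : ZMod p, (conj (v k) * v (k + 2 * j) - g k)
      = (A - v 0) * (A + χ' (2 * j) * B) + (A + χ' (2 * j) * B) * (A - v 0) := by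
    rw [← Finset.sum_subset (Finset.subset_univ ({0, -(2 * j)} : Finset (ZMod p))) ?_]
    · rw [Finset.sum_pair h0ne]
      have ht1 : conj (v 0) * v (0 + 2 * j) - g 0 = (A - v 0) * (A + χ' (2 * j) * B) := by
        rw [zero_add, hv0c, hvk (2 * j) hm0, hgdef]
        simp only [zero_add, hχ0]
        ring
      have ht2 : conj (v (-(2 * j))) * v (-(2 * j) + 2 * j) - g (-(2 * j))
          = (A + χ' (2 * j) * B) * (A - v 0) := by
        rw [neg_add_cancel, hcvk (-(2 * j)) (neg_ne_zero.mpr hm0), hgdef]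
        simp only [neg_add_cancel, hχ0, hχneg]
        ring
      rw [ht1, ht2]
    · intro k _ hk
      simp only [Finset.mem_insert, Finset.mem_singleton, not_or] at hk
      obtain ⟨hk1, hk2⟩ := hk
      have hk2' : k + 2 * j ≠ 0 := by
        intro h
        exact hk2 (by linear_combination h)
      rw [hcvk k hk1, hvk _ hk2', hgdef]
      ring
  have hS2 : ∑ k : ZMod p, conj (v k) * v (k + 2 * j)
      = -(p : ℂ) * A ^ 2 - B ^ 2 + 2 * (A - v 0) * (A + χ' (2 * j) * B) := by
    rw [Finset.sum_sub_distrib] at hsplit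
    linear_combination hsplit + hgsum
  rw [hS, hS2, hvk j hj, show (2 : ZMod p) * j = 2 * j from rfl,
    show χ' (2 * j) = χ' 2 * χ' j from hχmul 2 j]
  rcases hp8 with h8 | h8
  · -- p % 8 = 3 : 2 is a nonsquare
    have hns : ¬IsSquare (2 : ZMod p) := by
      rw [ZMod.exists_sq_eq_two_iff hp2]
      omega
    have hχ2 : χ' 2 = -1 := by
      simp only [hχ'def]
      rw [quadraticChar_neg_one_iff_not_isSquare.mpr hns]
      push_cast; ring
    rw [hχ2]
    have hβval : β = Real.sqrt (2 + c) / (2 + c) := by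
      rw [hβdef, if_neg (by omega)]
    have h4r : (c + 2) * β = Real.sqrt (2 + c) := by
      rw [hβval]
      field_simp
      ring
    have h4 : ((c : ℂ) + 2) * A = v 0 := by
      rw [hAdef, hv0]
      have h := congrArg (Complex.ofReal) h4r
      push_cast at h
      linear_combination Complex.I * h
    exact key_alg3 (p : ℂ) (c : ℂ) (v 0) (χ' j) A B hPC hε hB2 hv0sq h4
  · -- p % 8 = 7 : 2 is a square
    have hs : IsSquare (2 : ZMod p) := by
      rw [ZMod.exists_sq_eq_two_iff hp2]
      omega
    have hχ2 : χ' 2 = 1 := by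
      simp only [hχ'def]
      rw [(quadraticChar_one_iff_isSquare h2z).mpr hs]
      push_cast; ring
    rw [hχ2, one_mul]
    have hβval : β = -Real.sqrt (2 + c) / c := by
      rw [hβdef, if_pos h8]
    have h4r : c * β = -Real.sqrt (2 + c) := by
      rw [hβval]
      field_simp
    have h4 : (c : ℂ) * A = -(v 0) := by
      rw [hAdef, hv0]
      have h := congrArg (Complex.ofReal) h4r
      push_cast at h
      linear_combination Complex.I * h
    exact key_alg7 (p : ℂ) (c : ℂ) (v 0) (χ' j) A B hPC hε hB2 hv0sq h4
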